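/- In the unit disk with weight w(x,y) = 0.75 - 0.5(|x|+|y|) on {|x|+|y| < 0.5}, w(x,y) = |x|+|y| on {0.5 ≤ |x|+|y| ≤ 1}, and w = 1 elsewhere: the weighted length of the straight segment from (-0.5, 0) to (0.5, 0) equals 5/8, while the weighted length of the concatenation of segments from (-0.5,0) to (0, 0.2) and from (0, 0.2) to (0.5, 0) equals 0.575·√1.16, and 0.575·√1.16 < 5/8. -/

import Mathlib

noncomputable def w7 (p : ℝ × ℝ) : ℝ :=
  if |p.1| + |p.2| < 0.5 then 0.75 - 0.5 * (|p.1| + |p.2|)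
  else if |p.1| + |p.2| ≤ 1 then |p.1| + |p.2| else 1

lemma lin_int (c d a b : ℝ) :
    ∫ t in a..b, (c + d * t) = c * (b - a) + d * (b ^ 2 - a ^ 2) / 2 := by
  have hder : ∀ t : ℝ, HasDerivAt (fun t => c * t + d * t ^ 2 / 2) (c + d * t) t := by
    intro t
    have h1 := (hasDerivAt_id t).const_mul c
    have h2 := ((hasDerivAt_pow 2 t).const_mul d).div_const 2
    refine (h1.add h2).congr_deriv ?_
    simp; ring
  rw [intervalIntegral.integral_eq_sub_of_hasDerivAt (fun t _ => hder t)
    (by apply Continuous.intervalIntegrable; continuity)]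
  ring

theorem stmt7 :
    (∫ t in (0:ℝ)..1, w7 (-(1/2) + t, 0)) = 5/8 ∧
    ((∫ t in (0:ℝ)..1, Real.sqrt 0.29 * w7 (-(1/2) + t/2, t/5)) +
      (∫ t in (0:ℝ)..1, Real.sqrt 0.29 * w7 (t/2, 1/5 - t/5)) = 0.575 * Real.sqrt 1.16) ∧
    0.575 * Real.sqrt 1.16 < 5/8 := by
  have sqrt116 : Real.sqrt 1.16 = 2 * Real.sqrt 0.29 := by
    rw [show (1.16 : ℝ) = 2 ^ 2 * 0.29 by norm_num, Real.sqrt_mul (by positivity),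
      Real.sqrt_sq (by norm_num)]
  refine ⟨?_, ?_, ?_⟩
  · have heq : Set.EqOn (fun t : ℝ => w7 (-(1/2) + t, 0))
        (fun t : ℝ => 0.75 - 0.5 * |t - 1/2|) (Set.uIcc 0 1) := by
      intro t ht
      rw [Set.uIcc_of_le (by norm_num)] at ht
      obtain ⟨h0, h1⟩ := ht
      have hx : |(-(1/2 : ℝ) + t)| = |t - 1/2| := by ring_nf
      simp only [w7, abs_zero, add_zero, hx]
      rcases abs_cases (t - 1/2 : ℝ) with ⟨he, _⟩ | ⟨he, _⟩ <;>
        split_ifs with hc hc2 <;> rw [he] at * <;> norm_num at * <;> linarith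
    rw [intervalIntegral.integral_congr heq,
      ← intervalIntegral.integral_add_adjacent_intervals (a := (0:ℝ)) (b := 1/2) (c := 1)
        (by apply Continuous.intervalIntegrable; continuity)
        (by apply Continuous.intervalIntegrable; continuity)]
    have e1 : (∫ t in (0:ℝ)..(1/2), (0.75 - 0.5 * |t - 1/2|))
        = ∫ t in (0:ℝ)..(1/2), (1/2 + (1/2) * t) := by
      apply intervalIntegral.integral_congr
      intro t ht
      rw [Set.uIcc_of_le (by norm_num)] at ht
      simp only
      rw [abs_of_nonpos (by linarith [ht.2])]
      ring
    have e2 : (∫ t in (1/2:ℝ)..1, (0.75 - 0.5 * |t - 1/2|))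
        = ∫ t in (1/2:ℝ)..1, (1 + (-1/2) * t) := by
      apply intervalIntegral.integral_congr
      intro t ht
      rw [Set.uIcc_of_le (by norm_num)] at ht
      simp only
      rw [abs_of_nonneg (by linarith [ht.1])]
      ring
    rw [e1, e2, lin_int, lin_int]
    norm_num
  · have heq2 : Set.EqOn (fun t : ℝ => w7 (-(1/2) + t/2, t/5))
        (fun t : ℝ => 1/2 + (3/20) * t) (Set.uIcc 0 1) := by
      intro t ht
      rw [Set.uIcc_of_le (by norm_num)] at ht
      obtain ⟨h0, h1⟩ := ht
      have hx : |(-(1/2 : ℝ) + t/2)| = 1/2 - t/2 := by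
        rw [abs_of_nonpos (by linarith)]; ring
      have hy : |(t/5 : ℝ)| = t/5 := abs_of_nonneg (by linarith)
      simp only [w7, hx, hy]
      split_ifs with hc hc2 <;> norm_num at * <;> linarith
    have heq3 : Set.EqOn (fun t : ℝ => w7 (t/2, 1/5 - t/5))
        (fun t : ℝ => 13/20 + (-3/20) * t) (Set.uIcc 0 1) := by
      intro t ht
      rw [Set.uIcc_of_le (by norm_num)] at ht
      obtain ⟨h0, h1⟩ := ht
      have hx : |(t/2 : ℝ)| = t/2 := abs_of_nonneg (by linarith)
      have hy : |(1/5 - t/5 : ℝ)| = 1/5 - t/5 := abs_of_nonneg (by linarith)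
      simp only [w7, hx, hy]
      split_ifs with hc hc2 <;> norm_num at * <;> linarith
    have r2 : (∫ t in (0:ℝ)..1, Real.sqrt 0.29 * w7 (-(1/2) + t/2, t/5))
        = Real.sqrt 0.29 * (23/40) := by
      rw [intervalIntegral.integral_const_mul,
        intervalIntegral.integral_congr heq2, lin_int]
      norm_num
    have r3 : (∫ t in (0:ℝ)..1, Real.sqrt 0.29 * w7 (t/2, 1/5 - t/5))
        = Real.sqrt 0.29 * (23/40) := by
      rw [intervalIntegral.integral_const_mul,
        intervalIntegral.integral_congr heq3, lin_int]
      norm_num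
    rw [r2, r3, sqrt116]
    ring
  · rw [sqrt116]
    have h : Real.sqrt 0.29 < 0.5434 := by
      nlinarith [Real.sq_sqrt (show (0:ℝ) ≤ 0.29 by norm_num), Real.sqrt_nonneg (0.29:ℝ)]
    nlinarith
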